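/- Suppose in addition that every e ∈ E has exactly two elements, so that H is a weighted graph and the normalized Laplacian is the single-valued linear map 𝓛f = (D − A)D⁻¹f, where A∈ℝ^{V×V} has entries A_{xy} = Σ_{e∈E, e={x,y}} w(e). For λ > 0 and x, y ∈ V define W_λ(x,y) := sup{⟨f − λ·(D−A)D⁻¹f, δ_x − δ_y⟩ : f ∈ Lip_w^1(V)} (the Kantorovich–Rubinstein dual expression of the L¹-Wasserstein distance W₁(m_x^{1−λ}, m_y^{1−λ}) between the lazy random-walk measures). Then for all x ≠ y, lim_{λ↓0} |W_λ(x,y) − KD_λ(x,y)|/λ = 0. -/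

import Mathlib

open scoped BigOperators

noncomputable section

namespace HypRicci

variable {V : Type*} [Fintype V] [DecidableEq V]

/-- A finite weighted hypergraph on vertex set `V`: a finite set of nonempty
hyperedges together with positive weights. -/
structure Hypergraph (V : Type*) [Fintype V] [DecidableEq V] : Type _ where
  E : Finset (Finset V)
  w : Finset V → ℝ
  w_pos : ∀ e ∈ E, 0 < w e
  e_nonempty : ∀ e ∈ E, e.Nonempty

/-- Degree `d_x = ∑_{e ∋ x} w(e)`. -/
def deg (H : Hypergraph V) (x : V) : ℝ := ∑ e ∈ H.E, if x ∈ e then H.w e else 0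

/-- Volume `vol(V) = ∑_x d_x`. -/
def vol (H : Hypergraph V) : ℝ := ∑ x, deg H x

/-- Weighted inner product `⟨f,g⟩ = ∑_x f(x) g(x) / d_x`. -/
def inn (H : Hypergraph V) (f g : V → ℝ) : ℝ := ∑ x, f x * g x / deg H x

/-- Norm associated to `inn`. -/
def nrm (H : Hypergraph V) (f : V → ℝ) : ℝ := Real.sqrt (inn H f f)

/-- Indicator function `δ_x`. -/
def delta (x : V) : V → ℝ := fun z => if z = x then 1 else 0

/-- Standard (unweighted) dot product `u^⊤ v`. -/
def dot (u v : V → ℝ) : ℝ := ∑ x, u x * v x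

/-- Base polytope `B_e = conv{δ_x − δ_y : x,y ∈ e}`. -/
def Bp (e : Finset V) : Set (V → ℝ) :=
  convexHull ℝ {b : V → ℝ | ∃ x ∈ e, ∃ y ∈ e, b = delta x - delta y}

/-- The multivalued hypergraph Laplacian
`L(f) = {∑_e w(e) (b_e^⊤ f) b_e : b_e ∈ argmax_{b ∈ B_e} b^⊤ f}`. -/
def Lap (H : Hypergraph V) (f : V → ℝ) : Set (V → ℝ) :=
  { g | ∃ b : Finset V → (V → ℝ),
      (∀ e ∈ H.E, b e ∈ Bp e ∧ ∀ b' ∈ Bp e, dot b' f ≤ dot (b e) f) ∧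
      g = ∑ e ∈ H.E, (H.w e * dot (b e) f) • b e }

/-- `D⁻¹ f`. -/
def Dinv (H : Hypergraph V) (f : V → ℝ) : V → ℝ := fun x => f x / deg H x

/-- Normalized Laplacian `𝓛(f) = L(D⁻¹ f)`. -/
def NL (H : Hypergraph V) (f : V → ℝ) : Set (V → ℝ) := Lap H (Dinv H f)

/-- The resolvent `J_λ = (I + λ𝓛)⁻¹`: it sends `f` to the (unique) `g` with
`f ∈ g + λ 𝓛(g)`. -/
def Resolvent (H : Hypergraph V) (l : ℝ) (f : V → ℝ) : V → ℝ :=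
  Classical.epsilon fun g => ∃ h ∈ NL H g, f = g + l • h

/-- Adjacency: `x ∼ y` iff some hyperedge contains both. -/
def Adj (H : Hypergraph V) (x y : V) : Prop := ∃ e ∈ H.E, x ∈ e ∧ y ∈ e

/-- There is a chain of length `n` of successively adjacent vertices from `x` to `y`. -/
def chainProp (H : Hypergraph V) (x y : V) (n : ℕ) : Prop :=
  ∃ z : ℕ → V, z 0 = x ∧ z n = y ∧ ∀ i < n, Adj H (z i) (z (i + 1))

/-- Connectedness of the hypergraph. -/
def Connected (H : Hypergraph V) : Prop := ∀ x y : V, ∃ n, chainProp H x y n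

/-- Graph distance (as a natural number). -/
def hdistN (H : Hypergraph V) (x y : V) : ℕ := sInf {n | chainProp H x y n}

/-- Graph distance `d(x,y)` as a real number. -/
def gdist (H : Hypergraph V) (x y : V) : ℝ := (hdistN H x y : ℝ)

/-- Diameter `diam(H) = max_{x,y} d(x,y)`. -/
def hdiam (H : Hypergraph V) : ℝ :=
  (((Finset.univ : Finset (V × V)).sup fun p => hdistN H p.1 p.2 : ℕ) : ℝ)

/-- Weighted `1`-Lipschitz functions: `⟨f, δ_x − δ_y⟩ ≤ d(x,y)` for all `x, y`. -/
def Lip1 (H : Hypergraph V) : Set (V → ℝ) :=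
  { f | ∀ x y : V, inn H f (delta x - delta y) ≤ gdist H x y }

/-- The `λ`-nonlinear Kantorovich difference. -/
def KD (H : Hypergraph V) (l : ℝ) (x y : V) : ℝ :=
  sSup { r | ∃ f ∈ Lip1 H, r = inn H (Resolvent H l f) (delta x - delta y) }

/-- `κ_λ(x,y) = 1 − KD_λ(x,y)/d(x,y)`. -/
def kappa (H : Hypergraph V) (l : ℝ) (x y : V) : ℝ := 1 - KD H l x y / gdist H x y

/-- Lower coarse Ricci curvature `κ̲(x,y) = liminf_{λ↓0} κ_λ(x,y)/λ`. -/
def kappaLower (H : Hypergraph V) (x y : V) : EReal :=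
  Filter.liminf (fun l : ℝ => ((kappa H l x y / l : ℝ) : EReal)) (nhdsWithin 0 (Set.Ioi 0))

/-- Upper coarse Ricci curvature `κ̄(x,y) = limsup_{λ↓0} κ_λ(x,y)/λ`. -/
def kappaUpper (H : Hypergraph V) (x y : V) : EReal :=
  Filter.limsup (fun l : ℝ => ((kappa H l x y / l : ℝ) : EReal)) (nhdsWithin 0 (Set.Ioi 0))

/-- Canonical restriction `𝓛⁰ f`: the unique element of minimal norm of `𝓛(f)`. -/
def L0 (H : Hypergraph V) (f : V → ℝ) : V → ℝ :=
  Classical.epsilon fun g => g ∈ NL H f ∧ ∀ h ∈ NL H f, nrm H g ≤ nrm H h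

/-- The stationary distribution `π(x) = d_x / vol(V)`. -/
def piH (H : Hypergraph V) : V → ℝ := fun x => deg H x / vol H

/-- The energy `Q(h) = (1/2) ∑_e w(e) max_{x,y ∈ e} (h(x) − h(y))²`. -/
def Qform (H : Hypergraph V) (h : V → ℝ) : ℝ :=
  (1 / 2) * ∑ e ∈ H.E, H.w e * sSup { r | ∃ x ∈ e, ∃ y ∈ e, r = (h x - h y) ^ 2 }


section Aux

variable (H : Hypergraph V)

/-- Adjacency weights. -/
def Aadj (z y : V) : ℝ := ∑ e ∈ H.E, if e = ({z, y} : Finset V) then H.w e else 0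

/-- The graph normalized Laplacian `(D-A)D⁻¹`. -/
def Mop (f : V → ℝ) : V → ℝ := fun z =>
  f z - ∑ y' : V, (∑ e ∈ H.E, if e = ({z, y'} : Finset V) then H.w e else 0) * f y' / deg H y'

lemma Mop_apply (f : V → ℝ) (z : V) :
    Mop H f z = f z - ∑ y' : V, Aadj H z y' * f y' / deg H y' := rfl

lemma Aadj_nonneg (z y : V) : 0 ≤ Aadj H z y := by
  refine Finset.sum_nonneg fun e he => ?_
  split
  · exact (H.w_pos e he).le
  · exact le_rfl

lemma pair_eq {a b y : V} (hab : a ≠ b) : ({a, y} : Finset V) = {a, b} ↔ y = b := by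
  constructor
  · intro h
    have hb : b ∈ ({a, y} : Finset V) := by rw [h]; simp
    rcases Finset.mem_insert.mp hb with h' | h'
    · exact absurd h'.symm hab
    · exact (Finset.mem_singleton.mp h').symm
  · rintro rfl; rfl

lemma sum_Aadj (hg : ∀ e ∈ H.E, e.card = 2) (z : V) :
    ∑ y' : V, Aadj H z y' = deg H z := by
  unfold Aadj deg
  rw [Finset.sum_comm]
  refine Finset.sum_congr rfl fun e he => ?_
  obtain ⟨u, v, huv, rfl⟩ := Finset.card_eq_two.mp (hg e he)
  by_cases hz : z ∈ ({u, v} : Finset V)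
  · rw [if_pos hz]
    rcases Finset.mem_insert.mp hz with rfl | hz'
    · rw [Finset.sum_eq_single v]
      · rw [if_pos rfl]
      · intro y' _ hy'
        rw [if_neg]
        intro hcond
        exact hy' ((pair_eq huv).mp hcond.symm)
      · intro h; exact absurd (Finset.mem_univ v) h
    · have hz'' : z = v := Finset.mem_singleton.mp hz'
      subst hz''
      rw [Finset.sum_eq_single u]
      · rw [if_pos]
        rw [Finset.pair_comm]
      · intro y' _ hy'
        rw [if_neg]
        intro hcond
        have : ({z, y'} : Finset V) = {z, u} := hcond.symm.trans (Finset.pair_comm u z)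
        exact hy' ((pair_eq huv.symm).mp this)
      · intro h; exact absurd (Finset.mem_univ u) h
  · rw [if_neg hz, Finset.sum_eq_zero]
    intro y' _
    rw [if_neg]
    intro hc
    exact hz (by rw [hc]; exact Finset.mem_insert_self z {y'})

lemma inn_delta (h : V → ℝ) (a b : V) :
    inn H h (delta a - delta b) = h a / deg H a - h b / deg H b := by
  unfold inn delta
  rw [Finset.sum_congr rfl (fun z _ => show
      h z * ((fun w => if w = a then (1:ℝ) else 0) - fun w => if w = b then (1:ℝ) else 0) z / deg H z
      = (if z = a then h z / deg H z else 0) - (if z = b then h z / deg H z else 0) from by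
        simp only [Pi.sub_apply]; split_ifs <;> ring),
    Finset.sum_sub_distrib, Finset.sum_ite_eq', Finset.sum_ite_eq',
    if_pos (Finset.mem_univ a), if_pos (Finset.mem_univ b)]

lemma dot_delta (u v : V) (h : V → ℝ) : dot (delta u - delta v) h = h u - h v := by
  unfold dot delta
  rw [Finset.sum_congr rfl (fun z _ => show
      ((fun w => if w = u then (1:ℝ) else 0) - fun w => if w = v then (1:ℝ) else 0) z * h z
      = (if z = u then h z else 0) - (if z = v then h z else 0) from by
        simp only [Pi.sub_apply]; split_ifs <;> ring),
    Finset.sum_sub_distrib, Finset.sum_ite_eq', Finset.sum_ite_eq',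
    if_pos (Finset.mem_univ u), if_pos (Finset.mem_univ v)]

lemma dot_smul (t : ℝ) (b h : V → ℝ) : dot (t • b) h = t * dot b h := by
  unfold dot
  rw [Finset.mul_sum]
  exact Finset.sum_congr rfl fun z _ => by simp [mul_assoc]

lemma Mop_comb (p q : V → ℝ) (a c : ℝ) (z : V) :
    Mop H (fun w => a * p w + c * q w) z = a * Mop H p z + c * Mop H q z := by
  simp only [Mop_apply]
  rw [Finset.sum_congr rfl (fun y' _ => show Aadj H z y' * (a * p y' + c * q y') / deg H y'
      = a * (Aadj H z y' * p y' / deg H y') + c * (Aadj H z y' * q y' / deg H y') from by ring),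
    Finset.sum_add_distrib, ← Finset.mul_sum, ← Finset.mul_sum]
  ring

lemma Mop_deg (hg : ∀ e ∈ H.E, e.card = 2) (hd : ∀ x : V, 0 < deg H x) (z : V) :
    Mop H (deg H) z = 0 := by
  rw [Mop_apply,
    Finset.sum_congr rfl (fun y' _ => show Aadj H z y' * deg H y' / deg H y' = Aadj H z y' from by
      rw [mul_div_assoc, div_self (hd y').ne', mul_one]),
    sum_Aadj H hg, sub_self]

end Aux
section Aux2

set_option linter.unusedSectionVars false

variable (H : Hypergraph V)

lemma sum_bound (hg : ∀ e ∈ H.E, e.card = 2) (hd : ∀ x : V, 0 < deg H x)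
    {f : V → ℝ} {m : ℝ} (hm : ∀ z, |f z| / deg H z ≤ m) (z : V) :
    |∑ y' : V, Aadj H z y' * f y' / deg H y'| ≤ deg H z * m := by
  calc |∑ y' : V, Aadj H z y' * f y' / deg H y'|
      ≤ ∑ y' : V, |Aadj H z y' * f y' / deg H y'| := Finset.abs_sum_le_sum_abs _ _
    _ ≤ ∑ y' : V, Aadj H z y' * m := by
        refine Finset.sum_le_sum fun y' _ => ?_
        rw [abs_div, abs_mul, abs_of_nonneg (Aadj_nonneg H z y'),
          abs_of_pos (hd y'), mul_div_assoc]
        exact mul_le_mul_of_nonneg_left (hm y') (Aadj_nonneg H z y')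
    _ = deg H z * m := by rw [← Finset.sum_mul, sum_Aadj H hg]

lemma resolvent_bound (hg : ∀ e ∈ H.E, e.card = 2) (hd : ∀ x : V, 0 < deg H x)
    {l B : ℝ} (hl : 0 ≤ l) {f g : V → ℝ}
    (heq : ∀ z, f z = g z + l * Mop H g z)
    (hf : ∀ z, |f z| / deg H z ≤ B) [Nonempty V] : ∀ z, |g z| / deg H z ≤ B := by
  obtain ⟨z0, -, hz0⟩ := Finset.exists_max_image Finset.univ (fun z => |g z| / deg H z)
    Finset.univ_nonempty
  set m := |g z0| / deg H z0 with hm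
  have hmz : ∀ z, |g z| / deg H z ≤ m := fun z => hz0 z (Finset.mem_univ z)
  suffices hmB : m ≤ B by intro z; exact (hmz z).trans hmB
  have hd0 := hd z0
  have h1 : (1 + l) * g z0 = f z0 + l * ∑ y' : V, Aadj H z0 y' * g y' / deg H y' := by
    have h := heq z0
    rw [Mop_apply] at h
    rw [h]; ring
  have hS := sum_bound H hg hd hmz z0
  have h2 : (1 + l) * |g z0| ≤ |f z0| + l * (deg H z0 * m) := by
    have habs : |(1 + l) * g z0| ≤ |f z0| + l * |∑ y' : V, Aadj H z0 y' * g y' / deg H y'| := by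
      rw [h1]
      calc |f z0 + l * ∑ y' : V, Aadj H z0 y' * g y' / deg H y'|
          ≤ |f z0| + |l * ∑ y' : V, Aadj H z0 y' * g y' / deg H y'| := abs_add_le _ _
        _ = |f z0| + l * |∑ y' : V, Aadj H z0 y' * g y' / deg H y'| := by
            rw [abs_mul, abs_of_nonneg hl]
    rw [abs_mul, abs_of_pos (by linarith : (0:ℝ) < 1 + l)] at habs
    have := mul_le_mul_of_nonneg_left hS hl
    linarith
  have h3 : (1 + l) * m ≤ B + l * m := by
    have h4 : (1 + l) * |g z0| / deg H z0 ≤ (|f z0| + l * (deg H z0 * m)) / deg H z0 :=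
      (div_le_div_iff_of_pos_right hd0).mpr h2
    rw [mul_div_assoc] at h4
    have h5 : (|f z0| + l * (deg H z0 * m)) / deg H z0
        = |f z0| / deg H z0 + l * m := by field_simp
    rw [h5] at h4
    have := hf z0
    rw [← hm] at h4
    linarith
  linarith

lemma Mop_bound (hg : ∀ e ∈ H.E, e.card = 2) (hd : ∀ x : V, 0 < deg H x)
    {f : V → ℝ} {m : ℝ} (hm : ∀ z, |f z| / deg H z ≤ m) (z : V) :
    |Mop H f z| / deg H z ≤ 2 * m := by
  have hd0 := hd z
  have hS := sum_bound H hg hd hm z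
  have hfz : |f z| ≤ m * deg H z := by
    have := hm z; rw [div_le_iff₀ hd0] at this; linarith [this]
  have : |Mop H f z| ≤ 2 * m * deg H z := by
    rw [Mop_apply]
    calc |f z - ∑ y' : V, Aadj H z y' * f y' / deg H y'|
        ≤ |f z| + |∑ y' : V, Aadj H z y' * f y' / deg H y'| := abs_sub _ _
      _ ≤ m * deg H z + deg H z * m := add_le_add hfz hS
      _ = 2 * m * deg H z := by ring
  rw [div_le_iff₀ hd0]
  linarith

end Aux2
section Aux3

set_option linter.unusedSectionVars false

variable (H : Hypergraph V)

lemma Mop_add_pt (p q : V → ℝ) (z : V) : Mop H (p + q) z = Mop H p z + Mop H q z := by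
  have e : (p + q) = fun w => 1 * p w + 1 * q w := by funext w; simp [Pi.add_apply]
  rw [e, Mop_comb]; ring

lemma Mop_smul_pt (c : ℝ) (p : V → ℝ) (z : V) : Mop H (c • p) z = c * Mop H p z := by
  have e : (c • p) = fun w => c * p w + 0 * p w := by
    funext w; simp [Pi.smul_apply, smul_eq_mul]
  rw [e, Mop_comb]; ring

lemma exists_resolvent (hg : ∀ e ∈ H.E, e.card = 2) (hd : ∀ x : V, 0 < deg H x)
    {l : ℝ} (hl : 0 ≤ l) [Nonempty V] (f : V → ℝ) :
    ∃ g : V → ℝ, f = g + l • Mop H g := by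
  let T : (V → ℝ) →ₗ[ℝ] (V → ℝ) :=
    { toFun := fun g => g + l • Mop H g
      map_add' := by
        intro p q; funext z
        simp only [Pi.add_apply, Pi.smul_apply, smul_eq_mul]
        rw [Mop_add_pt]; ring
      map_smul' := by
        intro c p; funext z
        simp only [Pi.smul_apply, smul_eq_mul, RingHom.id_apply, Pi.add_apply]
        rw [Mop_smul_pt]; ring }
  have hinj : Function.Injective T := by
    rw [injective_iff_map_eq_zero]
    intro g hgz
    have heq : ∀ z, (fun _ : V => (0:ℝ)) z = g z + l * Mop H g z := by
      intro z
      have := congrFun hgz z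
      simp only [T, LinearMap.coe_mk, AddHom.coe_mk, Pi.add_apply, Pi.smul_apply,
        smul_eq_mul, Pi.zero_apply] at this
      simp only [this]
    have hb := resolvent_bound H hg hd (B := 0) hl heq (fun z => by simp)
    funext z
    have h1 := hb z
    have h2 : |g z| ≤ 0 := by
      have := (div_le_iff₀ (hd z)).mp h1
      simpa using this
    have := abs_nonneg (g z)
    simpa using abs_eq_zero.mp (le_antisymm h2 this)
  have hsurj : Function.Surjective T := LinearMap.injective_iff_surjective.mp hinj
  obtain ⟨g, hgeq⟩ := hsurj f
  exact ⟨g, by rw [← hgeq]; rfl⟩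

lemma resolvent_unique (hg : ∀ e ∈ H.E, e.card = 2) (hd : ∀ x : V, 0 < deg H x)
    {l : ℝ} (hl : 0 ≤ l) [Nonempty V] {f g1 g2 : V → ℝ}
    (h1 : ∀ z, f z = g1 z + l * Mop H g1 z) (h2 : ∀ z, f z = g2 z + l * Mop H g2 z) :
    g1 = g2 := by
  have hsub : ∀ z, (fun _ : V => (0:ℝ)) z
      = (fun w => g1 w - g2 w) z + l * Mop H (fun w => g1 w - g2 w) z := by
    intro z
    have hM : Mop H (fun w => g1 w - g2 w) z = Mop H g1 z - Mop H g2 z := by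
      rw [show (fun w => g1 w - g2 w) = fun w => 1 * g1 w + (-1) * g2 w from by
        funext w; ring, Mop_comb]
      ring
    simp only [hM]
    have e1 := h1 z; have e2 := h2 z
    linarith
  have hb := resolvent_bound H hg hd (B := 0) hl hsub (fun z => by simp)
  funext z
  have h3 := hb z
  have h4 : |g1 z - g2 z| ≤ 0 := by
    have := (div_le_iff₀ (hd z)).mp h3
    simpa using this
  have h5 := abs_nonneg (g1 z - g2 z)
  have := abs_eq_zero.mp (le_antisymm h4 h5)
  linarith

end Aux3
section Aux4

set_option linter.unusedSectionVars false

variable (H : Hypergraph V)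

lemma gen_mem_Bp {e : Finset V} {p q : V} (hp : p ∈ e) (hq : q ∈ e) :
    delta p - delta q ∈ Bp e :=
  subset_convexHull ℝ _ ⟨p, hp, q, hq, rfl⟩

lemma Bp_pair {u v : V} {b : V → ℝ} (hb : b ∈ Bp ({u, v} : Finset V)) :
    ∃ t : ℝ, |t| ≤ 1 ∧ b = t • (delta u - delta v) := by
  set C : Set (V → ℝ) := {b : V → ℝ | ∃ t : ℝ, |t| ≤ 1 ∧ b = t • (delta u - delta v)} with hC
  have hconv : Convex ℝ C := by
    rintro b1 ⟨t1, ht1, rfl⟩ b2 ⟨t2, ht2, rfl⟩ a c ha hc hac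
    refine ⟨a * t1 + c * t2, ?_, by rw [smul_smul, smul_smul, ← add_smul]⟩
    calc |a * t1 + c * t2| ≤ |a * t1| + |c * t2| := abs_add_le _ _
      _ = a * |t1| + c * |t2| := by rw [abs_mul, abs_mul, abs_of_nonneg ha, abs_of_nonneg hc]
      _ ≤ a * 1 + c * 1 :=
          add_le_add (mul_le_mul_of_nonneg_left ht1 ha) (mul_le_mul_of_nonneg_left ht2 hc)
      _ = 1 := by rw [mul_one, mul_one, hac]
  have hsub : {b : V → ℝ | ∃ x ∈ ({u, v} : Finset V), ∃ y ∈ ({u, v} : Finset V),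
      b = delta x - delta y} ⊆ C := by
    rintro b ⟨p, hp, q, hq, rfl⟩
    simp only [Finset.mem_insert, Finset.mem_singleton] at hp hq
    rcases hp with rfl | rfl <;> rcases hq with rfl | rfl
    · exact ⟨0, by norm_num, by rw [zero_smul, sub_self]⟩
    · exact ⟨1, by norm_num, (one_smul _ _).symm⟩
    · exact ⟨-1, by norm_num, by rw [neg_smul, one_smul, neg_sub]⟩
    · exact ⟨0, by norm_num, by rw [zero_smul, sub_self]⟩
  exact convexHull_min hsub hconv hb

lemma edge_term (hd : ∀ x : V, 0 < deg H x) {e : Finset V} {u v : V} (huv : u ≠ v)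
    (he2 : e = {u, v}) (f' : V → ℝ) {be : V → ℝ} (hmem : be ∈ Bp e)
    (hmax : ∀ b' ∈ Bp e, dot b' f' ≤ dot be f') (we : ℝ) (z : V) :
    (we * dot be f') * be z
      = (if z ∈ e then we * f' z else 0)
        - ∑ y' : V, (if e = ({z, y'} : Finset V) then we else 0) * f' y' := by
  subst he2
  obtain ⟨t, ht, rfl⟩ := Bp_pair hmem
  set c := f' u - f' v with hc
  have hdot : dot (t • (delta u - delta v)) f' = t * c := by rw [dot_smul, dot_delta]
  have h1 : c ≤ t * c := by
    have h := hmax (delta u - delta v)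
      (gen_mem_Bp (Finset.mem_insert_self u {v}) (by simp))
    rwa [dot_delta, hdot] at h
  have h2 : -c ≤ t * c := by
    have h := hmax (delta v - delta u) (gen_mem_Bp (by simp) (Finset.mem_insert_self u {v}))
    rw [dot_delta, hdot] at h
    have : f' v - f' u = -c := by rw [hc]; ring
    linarith [h, this.symm.le]
  have key : t * (t * c) = c := by
    rcases lt_trichotomy c 0 with h | h | h
    · have hle : t * c ≤ -c := by
        calc t * c ≤ |t * c| := le_abs_self _
          _ = |t| * |c| := abs_mul _ _
          _ ≤ 1 * |c| := mul_le_mul_of_nonneg_right ht (abs_nonneg c)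
          _ = -c := by rw [one_mul, abs_of_neg h]
      have heqc : t * c = -c := le_antisymm hle h2
      calc t * (t * c) = t * (-c) := by rw [heqc]
        _ = -(t * c) := by ring
        _ = c := by rw [heqc]; ring
    · rw [h]; ring
    · have hle : t * c ≤ c := by
        calc t * c ≤ |t * c| := le_abs_self _
          _ = |t| * |c| := abs_mul _ _
          _ ≤ 1 * |c| := mul_le_mul_of_nonneg_right ht (abs_nonneg c)
          _ = c := by rw [one_mul, abs_of_pos h]
      have heqc : t * c = c := le_antisymm hle h1
      rw [heqc, heqc]
  rw [hdot]
  simp only [Pi.smul_apply, Pi.sub_apply, smul_eq_mul]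
  have hval : we * (t * c) * (t * (delta u z - delta v z))
      = we * c * (delta u z - delta v z) := by
    have : we * (t * c) * (t * (delta u z - delta v z))
        = we * (t * (t * c)) * (delta u z - delta v z) := by ring
    rw [this, key]
  rw [hval]
  by_cases hzu : z = u
  · subst hzu
    have hmem2 : z ∈ ({z, v} : Finset V) := Finset.mem_insert_self z {v}
    rw [if_pos hmem2]
    have hsum : ∑ y' : V, (if ({z, v} : Finset V) = ({z, y'} : Finset V) then we else 0) * f' y'
        = we * f' v := by
      rw [Finset.sum_eq_single v]
      · rw [if_pos rfl]
      · intro y' _ hy'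
        rw [if_neg, zero_mul]
        intro hcond
        exact hy' ((pair_eq huv).mp hcond.symm)
      · intro h; exact absurd (Finset.mem_univ v) h
    rw [hsum]
    have hdz : delta z z = (1:ℝ) := by simp [delta]
    have hdv : delta v z = (0:ℝ) := by simp [delta, huv]
    rw [hdz, hdv, hc]
    ring
  · by_cases hzv : z = v
    · subst hzv
      have hmem2 : z ∈ ({u, z} : Finset V) := by simp
      rw [if_pos hmem2]
      have hsum : ∑ y' : V, (if ({u, z} : Finset V) = ({z, y'} : Finset V) then we else 0) * f' y'
          = we * f' u := by
        rw [Finset.sum_eq_single u]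
        · rw [if_pos (Finset.pair_comm u z)]
        · intro y' _ hy'
          rw [if_neg, zero_mul]
          intro hcond
          have : ({z, y'} : Finset V) = {z, u} := hcond.symm.trans (Finset.pair_comm u z)
          exact hy' ((pair_eq huv.symm).mp this)
        · intro h; exact absurd (Finset.mem_univ u) h
      rw [hsum]
      have hdz : delta z z = (1:ℝ) := by simp [delta]
      have hdu : delta u z = (0:ℝ) := by
        simp only [delta]
        rw [if_neg (fun h => huv h.symm)]
      rw [hdz, hdu, hc]
      ring
    · have hni : z ∉ ({u, v} : Finset V) := by
        simp [Finset.mem_insert, Finset.mem_singleton, hzu, hzv]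
      rw [if_neg hni]
      have hsum : ∑ y' : V, (if ({u, v} : Finset V) = ({z, y'} : Finset V) then we else 0) * f' y'
          = 0 := by
        refine Finset.sum_eq_zero fun y' _ => ?_
        rw [if_neg, zero_mul]
        intro hcond
        exact hni (by rw [hcond]; exact Finset.mem_insert_self z {y'})
      rw [hsum]
      have hdu : delta u z = (0:ℝ) := by simp [delta, hzu]
      have hdv : delta v z = (0:ℝ) := by simp [delta, hzv]
      rw [hdu, hdv]
      ring

end Aux4
section Aux5

set_option linter.unusedSectionVars false

variable (H : Hypergraph V)

lemma NL_elem (hg : ∀ e ∈ H.E, e.card = 2) (hd : ∀ x : V, 0 < deg H x)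
    (g : V → ℝ) : ∀ h ∈ NL H g, h = Mop H g := by
  rintro h ⟨b, hb, rfl⟩
  funext z
  rw [Finset.sum_apply]
  have hterm : ∀ e ∈ H.E, ((H.w e * dot (b e) (Dinv H g)) • b e) z
      = (if z ∈ e then H.w e * Dinv H g z else 0)
        - ∑ y' : V, (if e = ({z, y'} : Finset V) then H.w e else 0) * Dinv H g y' := by
    intro e he
    obtain ⟨u, v, huv, he2⟩ := Finset.card_eq_two.mp (hg e he)
    have h := edge_term H hd huv he2 (Dinv H g) (hb e he).1 (hb e he).2 (H.w e) z
    simpa [Pi.smul_apply, smul_eq_mul] using h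
  rw [Finset.sum_congr rfl hterm, Finset.sum_sub_distrib]
  have h1 : ∑ e ∈ H.E, (if z ∈ e then H.w e * Dinv H g z else 0) = deg H z * Dinv H g z := by
    rw [Finset.sum_congr rfl (fun e _ => show (if z ∈ e then H.w e * Dinv H g z else 0)
        = (if z ∈ e then H.w e else 0) * Dinv H g z from by
          split_ifs
          · rfl
          · exact (zero_mul _).symm),
      ← Finset.sum_mul]
    rfl
  have h2 : ∑ e ∈ H.E, ∑ y' : V, (if e = ({z, y'} : Finset V) then H.w e else 0) * Dinv H g y'
      = ∑ y' : V, Aadj H z y' * Dinv H g y' := by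
    rw [Finset.sum_comm]
    exact Finset.sum_congr rfl fun y' _ => (Finset.sum_mul _ _ _).symm
  rw [h1, h2, Mop_apply]
  unfold Dinv
  congr 1
  · rw [mul_comm, div_mul_cancel₀ _ (hd z).ne']
  · exact Finset.sum_congr rfl fun y' _ => (mul_div_assoc _ _ _).symm

lemma NL_mem (hg : ∀ e ∈ H.E, e.card = 2) (hd : ∀ x : V, 0 < deg H x)
    (g : V → ℝ) : Mop H g ∈ NL H g := by
  have hsel : ∀ e : Finset V, ∃ be : V → ℝ, e ∈ H.E →
      (be ∈ Bp e ∧ ∀ b' ∈ Bp e, dot b' (Dinv H g) ≤ dot be (Dinv H g)) := by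
    intro e
    by_cases he : e ∈ H.E
    · obtain ⟨u, v, huv, rfl⟩ := Finset.card_eq_two.mp (hg e he)
      by_cases hcs : 0 ≤ Dinv H g u - Dinv H g v
      · refine ⟨delta u - delta v, fun _ =>
          ⟨gen_mem_Bp (Finset.mem_insert_self u {v}) (by simp), ?_⟩⟩
        intro b' hb'
        obtain ⟨t, ht, rfl⟩ := Bp_pair hb'
        rw [dot_smul, dot_delta]
        calc t * (Dinv H g u - Dinv H g v) ≤ |t * (Dinv H g u - Dinv H g v)| := le_abs_self _
          _ = |t| * |Dinv H g u - Dinv H g v| := abs_mul _ _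
          _ ≤ 1 * (Dinv H g u - Dinv H g v) := by
              rw [abs_of_nonneg hcs]
              exact mul_le_mul_of_nonneg_right ht hcs
          _ = _ := one_mul _
      · refine ⟨delta v - delta u, fun _ =>
          ⟨gen_mem_Bp (by simp) (Finset.mem_insert_self u {v}), ?_⟩⟩
        intro b' hb'
        obtain ⟨t, ht, rfl⟩ := Bp_pair hb'
        rw [dot_smul, dot_delta, dot_delta]
        push_neg at hcs
        have hneg : 0 ≤ Dinv H g v - Dinv H g u := by linarith
        calc t * (Dinv H g u - Dinv H g v) ≤ |t * (Dinv H g u - Dinv H g v)| := le_abs_self _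
          _ = |t| * |Dinv H g u - Dinv H g v| := abs_mul _ _
          _ ≤ 1 * (Dinv H g v - Dinv H g u) := by
              rw [abs_of_neg (by linarith : Dinv H g u - Dinv H g v < 0)]
              have : -(Dinv H g u - Dinv H g v) = Dinv H g v - Dinv H g u := by ring
              rw [this]
              exact mul_le_mul_of_nonneg_right ht hneg
          _ = _ := one_mul _
    · exact ⟨0, fun h => absurd h he⟩
  choose b hbsel using hsel
  have hmem : (∑ e ∈ H.E, (H.w e * dot (b e) (Dinv H g)) • b e) ∈ NL H g :=
    ⟨b, fun e he => hbsel e he, rfl⟩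
  have heq := NL_elem H hg hd g _ hmem
  rwa [heq] at hmem

lemma resolvent_eq (hg : ∀ e ∈ H.E, e.card = 2) (hd : ∀ x : V, 0 < deg H x)
    {l : ℝ} (hl : 0 ≤ l) [Nonempty V] (f : V → ℝ) :
    f = Resolvent H l f + l • Mop H (Resolvent H l f) := by
  obtain ⟨g, hgf⟩ := exists_resolvent H hg hd hl f
  have hex : ∃ g', ∃ h ∈ NL H g', f = g' + l • h :=
    ⟨g, Mop H g, NL_mem H hg hd g, hgf⟩
  have hspec := Classical.epsilon_spec hex
  obtain ⟨h, hmem, heq⟩ := hspec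
  rw [NL_elem H hg hd _ h hmem] at heq
  unfold Resolvent
  exact heq

end Aux5
section Aux6

set_option linter.unusedSectionVars false

variable (H : Hypergraph V)

lemma gdist_le_hdiam (a b : V) : gdist H a b ≤ hdiam H := by
  unfold gdist hdiam
  exact_mod_cast Finset.le_sup (f := fun p : V × V => hdistN H p.1 p.2)
    (Finset.mem_univ (a, b))

lemma hdiam_nonneg : 0 ≤ hdiam H := Nat.cast_nonneg _

lemma gdist_nonneg (a b : V) : 0 ≤ gdist H a b := Nat.cast_nonneg _

lemma zero_mem_Lip1 : (fun _ : V => (0:ℝ)) ∈ Lip1 H := by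
  intro a b
  have : inn H (fun _ : V => (0:ℝ)) (delta a - delta b) = 0 := by
    unfold inn; simp
  rw [this]
  exact gdist_nonneg H a b

lemma shift_mem_Lip1 (hd : ∀ x : V, 0 < deg H x) {f : V → ℝ} (hf : f ∈ Lip1 H) (c : ℝ) :
    (fun z => f z - c * deg H z) ∈ Lip1 H := by
  intro a b
  rw [inn_delta]
  have hfa := hf a b
  rw [inn_delta] at hfa
  have ha : (f a - c * deg H a) / deg H a = f a / deg H a - c := by
    rw [sub_div, mul_div_assoc, div_self (hd a).ne', mul_one]
  have hb : (f b - c * deg H b) / deg H b = f b / deg H b - c := by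
    rw [sub_div, mul_div_assoc, div_self (hd b).ne', mul_one]
  rw [ha, hb]
  linarith

lemma lip_norm (hd : ∀ x : V, 0 < deg H x) {f : V → ℝ} (hf : f ∈ Lip1 H) (x : V) :
    ∀ z, |f z - f x / deg H x * deg H z| / deg H z ≤ hdiam H := by
  intro z
  have hdz := hd z
  have h1 : f z / deg H z - f x / deg H x ≤ gdist H z x := by
    have := hf z x; rwa [inn_delta] at this
  have h2 : f x / deg H x - f z / deg H z ≤ gdist H x z := by
    have := hf x z; rwa [inn_delta] at this
  have h3 := gdist_le_hdiam H z x
  have h4 := gdist_le_hdiam H x z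
  rw [div_le_iff₀ hdz, abs_le]
  have e1 : f z / deg H z * deg H z = f z := div_mul_cancel₀ _ hdz.ne'
  have h5 : (f z / deg H z - f x / deg H x) * deg H z ≤ hdiam H * deg H z :=
    mul_le_mul_of_nonneg_right (h1.trans h3) hdz.le
  have h6 : (f x / deg H x - f z / deg H z) * deg H z ≤ hdiam H * deg H z :=
    mul_le_mul_of_nonneg_right (h2.trans h4) hdz.le
  rw [sub_mul, e1] at h5
  rw [sub_mul, e1] at h6
  constructor <;> linarith

end Aux6
section Aux7

set_option linter.unusedSectionVars false

variable (H : Hypergraph V)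

lemma pack (hg : ∀ e ∈ H.E, e.card = 2) (hd : ∀ x : V, 0 < deg H x) [Nonempty V]
    {l : ℝ} (hl : 0 < l) (x y : V) {f : V → ℝ} (hf : f ∈ Lip1 H) :
    ∃ ft ∈ Lip1 H,
      inn H (fun z => f z - l * Mop H f z) (delta x - delta y)
        = inn H (fun z => ft z - l * Mop H ft z) (delta x - delta y) ∧
      inn H (Resolvent H l f) (delta x - delta y)
        = inn H (Resolvent H l ft) (delta x - delta y) ∧
      |inn H (fun z => ft z - l * Mop H ft z) (delta x - delta y)
        - inn H (Resolvent H l ft) (delta x - delta y)| ≤ 8 * hdiam H * (l * l) ∧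
      |inn H (Resolvent H l ft) (delta x - delta y)| ≤ 2 * hdiam H := by
  set c : ℝ := f x / deg H x with hc_def
  set ft : V → ℝ := fun z => f z - c * deg H z with hft_def
  have hft : ft ∈ Lip1 H := shift_mem_Lip1 H hd hf c
  have hftm : ∀ z, |ft z| / deg H z ≤ hdiam H := lip_norm H hd hf x
  set gt : V → ℝ := Resolvent H l ft with hgt_def
  have hgt := resolvent_eq H hg hd hl.le ft
  have hgtpt : ∀ z, ft z = gt z + l * Mop H gt z := by
    intro z
    have := congrFun hgt z
    simpa [Pi.add_apply, Pi.smul_apply, smul_eq_mul] using this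
  have hgtm : ∀ z, |gt z| / deg H z ≤ hdiam H :=
    resolvent_bound H hg hd hl.le hgtpt hftm
  have hMgtm : ∀ z, |Mop H gt z| / deg H z ≤ 2 * hdiam H := Mop_bound H hg hd hgtm
  have hMMgtm : ∀ z, |Mop H (Mop H gt) z| / deg H z ≤ 2 * (2 * hdiam H) :=
    Mop_bound H hg hd hMgtm
  -- Mop of ft in terms of gt
  have hMft : ∀ z, Mop H ft z = Mop H gt z + l * Mop H (Mop H gt) z := by
    intro z
    have e : ft = fun w => 1 * gt w + l * Mop H gt w := by
      funext w; rw [hgtpt w]; ring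
    rw [e, Mop_comb]; ring
  have he : ∀ z, (ft z - l * Mop H ft z) - gt z = -(l * l) * Mop H (Mop H gt) z := by
    intro z
    rw [hMft z, hgtpt z]; ring
  -- Mop invariance under the degree shift
  have hMf : ∀ z, Mop H ft z = Mop H f z := by
    intro z
    have e : ft = fun w => 1 * f w + (-c) * deg H w := by
      funext w; rw [hft_def]; ring
    rw [e, Mop_comb, Mop_deg H hg hd]; ring
  -- (1) equality of W-values
  have hW : ∀ z, (ft z - l * Mop H ft z) / deg H z
      = (f z - l * Mop H f z) / deg H z - c := by
    intro z
    rw [hMf z]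
    have e : ft z - l * Mop H f z = (f z - l * Mop H f z) - c * deg H z := by
      rw [hft_def]; ring
    rw [e, sub_div, mul_div_assoc, div_self (hd z).ne', mul_one]
  have hWeq : inn H (fun z => f z - l * Mop H f z) (delta x - delta y)
      = inn H (fun z => ft z - l * Mop H ft z) (delta x - delta y) := by
    rw [inn_delta, inn_delta, hW x, hW y]; ring
  -- (2) equality of KD-values
  have hKeq : inn H (Resolvent H l f) (delta x - delta y)
      = inn H (Resolvent H l ft) (delta x - delta y) := by
    set g : V → ℝ := Resolvent H l f with hg_def
    have hgeq := resolvent_eq H hg hd hl.le f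
    have hgpt : ∀ z, f z = g z + l * Mop H g z := by
      intro z
      have := congrFun hgeq z
      simpa [Pi.add_apply, Pi.smul_apply, smul_eq_mul] using this
    set g' : V → ℝ := fun z => g z - c * deg H z with hg'_def
    have hMg' : ∀ z, Mop H g' z = Mop H g z := by
      intro z
      have e : g' = fun w => 1 * g w + (-c) * deg H w := by
        funext w; rw [hg'_def]; ring
      rw [e, Mop_comb, Mop_deg H hg hd]; ring
    have hg'eq : ∀ z, ft z = g' z + l * Mop H g' z := by
      intro z
      rw [hMg' z]
      have := hgpt z
      rw [hft_def, hg'_def]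
      simp only []
      linarith
    have huniq : gt = g' := resolvent_unique H hg hd hl.le hgtpt hg'eq
    rw [inn_delta, inn_delta, ← hgt_def, huniq]
    have ex : ∀ z, g' z / deg H z = g z / deg H z - c := by
      intro z
      rw [hg'_def]
      simp only []
      rw [sub_div, mul_div_assoc, div_self (hd z).ne', mul_one]
    rw [ex x, ex y]; ring
  -- (3) the quantitative bound
  have habs : ∀ z, |(ft z - l * Mop H ft z) - gt z| / deg H z
      ≤ l * l * (4 * hdiam H) := by
    intro z
    have h := hMMgtm z
    rw [he z, abs_mul, abs_neg, abs_of_nonneg (mul_nonneg hl.le hl.le), mul_div_assoc]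
    have h2 := mul_le_mul_of_nonneg_left h (mul_nonneg hl.le hl.le)
    linarith
  have hbound : |inn H (fun z => ft z - l * Mop H ft z) (delta x - delta y)
      - inn H (Resolvent H l ft) (delta x - delta y)| ≤ 8 * hdiam H * (l * l) := by
    rw [inn_delta, inn_delta, ← hgt_def]
    have e : (ft x - l * Mop H ft x) / deg H x - (ft y - l * Mop H ft y) / deg H y
        - (gt x / deg H x - gt y / deg H y)
        = ((ft x - l * Mop H ft x) - gt x) / deg H x
          - ((ft y - l * Mop H ft y) - gt y) / deg H y := by
      rw [sub_div, sub_div]; ring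
    rw [e]
    have hax : |((ft x - l * Mop H ft x) - gt x) / deg H x| ≤ l * l * (4 * hdiam H) := by
      rw [abs_div, abs_of_pos (hd x)]; exact habs x
    have hay : |((ft y - l * Mop H ft y) - gt y) / deg H y| ≤ l * l * (4 * hdiam H) := by
      rw [abs_div, abs_of_pos (hd y)]; exact habs y
    calc |((ft x - l * Mop H ft x) - gt x) / deg H x
          - ((ft y - l * Mop H ft y) - gt y) / deg H y|
        ≤ |((ft x - l * Mop H ft x) - gt x) / deg H x|
          + |((ft y - l * Mop H ft y) - gt y) / deg H y| := abs_sub _ _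
      _ ≤ l * l * (4 * hdiam H) + l * l * (4 * hdiam H) := add_le_add hax hay
      _ = 8 * hdiam H * (l * l) := by ring
  have hbabs : |inn H (Resolvent H l ft) (delta x - delta y)| ≤ 2 * hdiam H := by
    rw [inn_delta, ← hgt_def]
    have hax : |gt x / deg H x| ≤ hdiam H := by
      rw [abs_div, abs_of_pos (hd x)]; exact hgtm x
    have hay : |gt y / deg H y| ≤ hdiam H := by
      rw [abs_div, abs_of_pos (hd y)]; exact hgtm y
    calc |gt x / deg H x - gt y / deg H y|
        ≤ |gt x / deg H x| + |gt y / deg H y| := abs_sub _ _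
      _ ≤ hdiam H + hdiam H := add_le_add hax hay
      _ = 2 * hdiam H := by ring
  exact ⟨ft, hft, hWeq, hKeq, hbound, hbabs⟩

end Aux7
section Aux8

set_option linter.unusedSectionVars false

variable (H : Hypergraph V)

lemma main_est (hg : ∀ e ∈ H.E, e.card = 2) (hd : ∀ x : V, 0 < deg H x) [Nonempty V]
    {l : ℝ} (hl : 0 < l) (x y : V) :
    |sSup {r : ℝ | ∃ f ∈ Lip1 H,
        r = inn H (fun z => f z - l * Mop H f z) (delta x - delta y)}
      - KD H l x y| ≤ 8 * hdiam H * (l * l) := by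
  have hD := hdiam_nonneg H
  set A : Set ℝ := {r : ℝ | ∃ f ∈ Lip1 H,
    r = inn H (fun z => f z - l * Mop H f z) (delta x - delta y)} with hA_def
  set B : Set ℝ := {r : ℝ | ∃ f ∈ Lip1 H,
    r = inn H (Resolvent H l f) (delta x - delta y)} with hB_def
  have hKD : KD H l x y = sSup B := rfl
  have hAne : A.Nonempty := ⟨_, ⟨fun _ => 0, zero_mem_Lip1 H, rfl⟩⟩
  have hBne : B.Nonempty := ⟨_, ⟨fun _ => 0, zero_mem_Lip1 H, rfl⟩⟩
  have hBbdd : BddAbove B := by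
    refine ⟨2 * hdiam H, fun r hr => ?_⟩
    obtain ⟨f, hf, rfl⟩ := hr
    obtain ⟨ft, hft, -, hKeq, -, hbabs⟩ := pack H hg hd hl x y hf
    rw [hKeq]
    exact (le_abs_self _).trans hbabs
  have hAbdd : BddAbove A := by
    refine ⟨2 * hdiam H + 8 * hdiam H * (l * l), fun r hr => ?_⟩
    obtain ⟨f, hf, rfl⟩ := hr
    obtain ⟨ft, hft, hWeq, -, hbound, hbabs⟩ := pack H hg hd hl x y hf
    rw [hWeq]
    have h1 := abs_le.mp hbound
    have h2 := abs_le.mp hbabs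
    linarith [h1.2, h2.2]
  have hAB : sSup A ≤ sSup B + 8 * hdiam H * (l * l) := by
    refine csSup_le hAne fun r hr => ?_
    obtain ⟨f, hf, rfl⟩ := hr
    obtain ⟨ft, hft, hWeq, -, hbound, -⟩ := pack H hg hd hl x y hf
    rw [hWeq]
    have h1 := (abs_le.mp hbound).2
    have hmem : inn H (Resolvent H l ft) (delta x - delta y) ∈ B := ⟨ft, hft, rfl⟩
    have h2 := le_csSup hBbdd hmem
    linarith
  have hBA : sSup B ≤ sSup A + 8 * hdiam H * (l * l) := by
    refine csSup_le hBne fun r hr => ?_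
    obtain ⟨f, hf, rfl⟩ := hr
    obtain ⟨ft, hft, hWeq, hKeq, hbound, -⟩ := pack H hg hd hl x y hf
    rw [hKeq]
    have h1 := (abs_le.mp hbound).1
    have hmem : inn H (fun z => ft z - l * Mop H ft z) (delta x - delta y) ∈ A :=
      ⟨ft, hft, rfl⟩
    have h2 := le_csSup hAbdd hmem
    linarith
  rw [hKD]
  rw [abs_le]
  constructor <;> linarith

end Aux8

/-- for graphs (each hyperedge has exactly two elements), the
Kantorovich–Rubinstein dual expression
`W_λ(x,y) = sup{⟨f − λ(D−A)D⁻¹f, δ_x − δ_y⟩ : f ∈ Lip_w^1(V)}` of the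
`L¹`-Wasserstein distance between the lazy random-walk measures satisfies
`lim_{λ↓0} |W_λ(x,y) − KD_λ(x,y)|/λ = 0` for all `x ≠ y`. -/
theorem stmt19 [Nonempty V] (H : Hypergraph V) (hconn : Connected H)
    (hdeg : ∀ x : V, 0 < deg H x)
    (hgraph : ∀ e ∈ H.E, e.card = 2) (x y : V) (hxy : x ≠ y) :
    Filter.Tendsto
      (fun l : ℝ =>
        |sSup { r : ℝ | ∃ f ∈ Lip1 H,
            r = inn H
              (fun z => f z - l * (f z - ∑ y' : V,
                (∑ e ∈ H.E, if e = ({z, y'} : Finset V) then H.w e else 0)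
                  * f y' / deg H y'))
              (delta x - delta y) }
          - KD H l x y| / l)
      (nhdsWithin 0 (Set.Ioi 0)) (nhds 0) := by
  have hD := hdiam_nonneg H
  have key : ∀ l : ℝ, l ∈ Set.Ioi (0:ℝ) →
      |sSup { r : ℝ | ∃ f ∈ Lip1 H,
          r = inn H
            (fun z => f z - l * (f z - ∑ y' : V,
              (∑ e ∈ H.E, if e = ({z, y'} : Finset V) then H.w e else 0)
                * f y' / deg H y'))
            (delta x - delta y) }
        - KD H l x y| / l ≤ 8 * hdiam H * l := by
    intro l hl
    have hst : { r : ℝ | ∃ f ∈ Lip1 H,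
        r = inn H
          (fun z => f z - l * (f z - ∑ y' : V,
            (∑ e ∈ H.E, if e = ({z, y'} : Finset V) then H.w e else 0)
              * f y' / deg H y'))
          (delta x - delta y) }
        = {r : ℝ | ∃ f ∈ Lip1 H,
            r = inn H (fun z => f z - l * Mop H f z) (delta x - delta y)} := rfl
    rw [hst, div_le_iff₀ hl]
    calc |sSup {r : ℝ | ∃ f ∈ Lip1 H,
            r = inn H (fun z => f z - l * Mop H f z) (delta x - delta y)}
          - KD H l x y|
        ≤ 8 * hdiam H * (l * l) := main_est H hgraph hdeg hl x y
      _ = 8 * hdiam H * l * l := by ring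
  refine tendsto_of_tendsto_of_tendsto_of_le_of_le' (h := fun l : ℝ => 8 * hdiam H * l)
    tendsto_const_nhds ?_ ?_ ?_
  · have h0 : Filter.Tendsto (fun l : ℝ => 8 * hdiam H * l) (nhds 0) (nhds 0) := by
      simpa using (continuous_mul_left (8 * hdiam H)).tendsto (0:ℝ)
    exact h0.mono_left nhdsWithin_le_nhds
  · filter_upwards [self_mem_nhdsWithin] with l hl
    exact div_nonneg (abs_nonneg _) (le_of_lt hl)
  · filter_upwards [self_mem_nhdsWithin] with l hl
    exact key l hl

end HypRicci
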